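/- Fix n ≥ 3 and let a ∈ ℤ^{n−3} with S = Σ a_i and N = Σ a_i^2. Then the n-tuples r₊ = (S^2 + N, S^2 + N, −S, a) and r₋ = (−(S+1)^2 − N, −(S+1)^2 − N, −(S+1), a) both satisfy F_n = 0; moreover 1 + s(r₊) > 0 and 1 + s(r₋) < 0, and both r₊ and r₋ are roots: every neighbor of r₊ (respectively r₋) has strictly greater height than r₊ (respectively r₋). -/

import Mathlib

open Finset

def F {n : ℕ} (x : Fin n → ℤ) : ℤ :=
  (∑ i, x i) ^ 2 - (∑ i, x i) - 4 * ∑ i, ∑ j, if i < j then x i * x j else 0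

def nbr {n : ℕ} (a : Fin n → ℤ) (k : Fin n) : Fin n → ℤ :=
  Function.update a k (2 * (∑ i ∈ univ.erase k, a i) + 1 - a k)

def height {n : ℕ} (x : Fin n → ℤ) : ℤ := |1 + ∑ i, x i|

/-- A solution is a root when all of its neighbors have strictly greater height. -/
def IsRoot {n : ℕ} (a : Fin n → ℤ) : Prop := ∀ k, height a < height (nbr a k)


lemma sq_sum_eq {n : ℕ} (x : Fin n → ℤ) :
    (∑ i, x i) ^ 2 = ∑ i, (x i) ^ 2 +
      2 * ∑ i, ∑ j, if i < j then x i * x j else 0 := by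
  have h1 : (∑ i, x i) ^ 2 = ∑ i, ∑ j, x i * x j := by
    rw [sq, Finset.sum_mul_sum]
  have h2 : ∀ i j : Fin n, x i * x j =
      (if i < j then x i * x j else 0) + (if j < i then x i * x j else 0) +
      (if i = j then x i * x j else 0) := by
    intro i j
    rcases lt_trichotomy i j with h | h | h
    · simp [h, h.ne, not_lt.mpr h.le]
    · simp [h]
    · simp [h, h.ne', not_lt.mpr h.le]
  calc (∑ i, x i) ^ 2 = ∑ i, ∑ j, ((if i < j then x i * x j else 0) +
        (if j < i then x i * x j else 0) + (if i = j then x i * x j else 0)) := by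
        rw [h1]; exact Finset.sum_congr rfl fun i _ => Finset.sum_congr rfl fun j _ => h2 i j
    _ = (∑ i, ∑ j, if i < j then x i * x j else 0) +
        (∑ i, ∑ j, if j < i then x i * x j else 0) +
        (∑ i, ∑ j, if i = j then x i * x j else 0) := by
        simp [Finset.sum_add_distrib]
    _ = ∑ i, (x i) ^ 2 + 2 * ∑ i, ∑ j, if i < j then x i * x j else 0 := by
        have h3 : (∑ i, ∑ j, if j < i then x i * x j else 0) =
            ∑ i, ∑ j, if i < j then x i * x j else 0 := by
          rw [Finset.sum_comm]
          exact Finset.sum_congr rfl fun i _ => Finset.sum_congr rfl fun j _ => by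
            split <;> ring
        have h4 : (∑ i : Fin n, ∑ j, if i = j then x i * x j else 0) = ∑ i, (x i) ^ 2 := by
          refine Finset.sum_congr rfl fun i _ => ?_
          rw [Finset.sum_ite_eq univ i (fun j => x i * x j)]
          simp [sq]
        rw [h3, h4]; ring

lemma F_eq {n : ℕ} (x : Fin n → ℤ) :
    F x = 2 * ∑ i, (x i) ^ 2 - (∑ i, x i) ^ 2 - ∑ i, x i := by
  have := sq_sum_eq x
  unfold F
  linarith

lemma sum_append_g {d : ℕ} (g : ℤ → ℤ) (u v w : ℤ) (a : Fin d → ℤ) :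
    ∑ j, g (Fin.append ![u, v, w] a j) = g u + g v + g w + ∑ i, g (a i) := by
  rw [Fin.sum_univ_add (f := fun j => g (Fin.append ![u, v, w] a j))]
  simp [Fin.sum_univ_three]

lemma sum_nbr {n : ℕ} (x : Fin n → ℤ) (k : Fin n) :
    1 + ∑ i, nbr x k i = 3 * (1 + ∑ i, x i) - 1 - 4 * x k := by
  unfold nbr
  rw [Finset.sum_update_of_mem (Finset.mem_univ k), ← Finset.erase_eq,
    Finset.sum_erase_eq_sub (Finset.mem_univ k)]
  ring

lemma int_mul_succ_nonneg (m : ℤ) : 0 ≤ m * (m + 1) := by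
  rcases le_or_gt 0 m with h | h
  · positivity
  · nlinarith


/-- For any `a ∈ ℤ^{n-3}` (`n = 3 + d ≥ 3`), with `S = Σ aᵢ` and `N = Σ aᵢ²`, the
tuples `r₊ = (S²+N, S²+N, −S, a)` and `r₋ = (−(S+1)²−N, −(S+1)²−N, −(S+1), a)` are,
respectively, a positive and a negative root of `F_n = 0`. -/
theorem stmt_7 (d : ℕ) (a : Fin d → ℤ) :
    F (Fin.append ![(∑ i, a i) ^ 2 + ∑ i, (a i) ^ 2, (∑ i, a i) ^ 2 + ∑ i, (a i) ^ 2,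
        -(∑ i, a i)] a) = 0 ∧
    F (Fin.append ![-((∑ i, a i) + 1) ^ 2 - ∑ i, (a i) ^ 2,
        -((∑ i, a i) + 1) ^ 2 - ∑ i, (a i) ^ 2, -((∑ i, a i) + 1)] a) = 0 ∧
    0 < 1 + ∑ j, (Fin.append ![(∑ i, a i) ^ 2 + ∑ i, (a i) ^ 2,
        (∑ i, a i) ^ 2 + ∑ i, (a i) ^ 2, -(∑ i, a i)] a) j ∧
    1 + ∑ j, (Fin.append ![-((∑ i, a i) + 1) ^ 2 - ∑ i, (a i) ^ 2,
        -((∑ i, a i) + 1) ^ 2 - ∑ i, (a i) ^ 2, -((∑ i, a i) + 1)] a) j < 0 ∧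
    IsRoot (Fin.append ![(∑ i, a i) ^ 2 + ∑ i, (a i) ^ 2,
        (∑ i, a i) ^ 2 + ∑ i, (a i) ^ 2, -(∑ i, a i)] a) ∧
    IsRoot (Fin.append ![-((∑ i, a i) + 1) ^ 2 - ∑ i, (a i) ^ 2,
        -((∑ i, a i) + 1) ^ 2 - ∑ i, (a i) ^ 2, -((∑ i, a i) + 1)] a) := by
  set S : ℤ := ∑ i, a i with hS
  set N : ℤ := ∑ i, (a i) ^ 2 with hN
  have hN0 : 0 ≤ N := Finset.sum_nonneg fun i _ => sq_nonneg _
  have hNa : ∀ j : Fin d, (a j) ^ 2 ≤ N := fun j =>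
    Finset.single_le_sum (fun i _ => sq_nonneg (a i)) (Finset.mem_univ j)
  have hNS : -S ≤ N := by
    rw [hS, hN, ← Finset.sum_neg_distrib]
    exact Finset.sum_le_sum fun i _ => by nlinarith [int_mul_succ_nonneg (a i)]
  have hsp : ∑ j, (Fin.append ![S ^ 2 + N, S ^ 2 + N, -S] a) j = 2 * (S ^ 2 + N) := by
    have := sum_append_g (fun t => t) (S ^ 2 + N) (S ^ 2 + N) (-S) a
    rw [this, ← hS]; ring
  have hsqp : ∑ j, ((Fin.append ![S ^ 2 + N, S ^ 2 + N, -S] a) j) ^ 2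
      = 2 * (S ^ 2 + N) ^ 2 + S ^ 2 + N := by
    have := sum_append_g (fun t => t ^ 2) (S ^ 2 + N) (S ^ 2 + N) (-S) a
    rw [this, ← hN]; ring
  have hsm : ∑ j, (Fin.append ![-(S + 1) ^ 2 - N, -(S + 1) ^ 2 - N, -(S + 1)] a) j
      = -2 * ((S + 1) ^ 2 + N) - 1 := by
    have := sum_append_g (fun t => t) (-(S + 1) ^ 2 - N) (-(S + 1) ^ 2 - N) (-(S + 1)) a
    rw [this, ← hS]; ring
  have hsqm : ∑ j, ((Fin.append ![-(S + 1) ^ 2 - N, -(S + 1) ^ 2 - N, -(S + 1)] a) j) ^ 2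
      = 2 * ((S + 1) ^ 2 + N) ^ 2 + (S + 1) ^ 2 + N := by
    have := sum_append_g (fun t => t ^ 2) (-(S + 1) ^ 2 - N) (-(S + 1) ^ 2 - N) (-(S + 1)) a
    rw [this, ← hN]; ring
  have hpos : (0 : ℤ) < 1 + 2 * (S ^ 2 + N) := by positivity
  have hT : 1 ≤ (S + 1) ^ 2 + N := by nlinarith [int_mul_succ_nonneg S]
  refine ⟨?_, ?_, ?_, ?_, ?_, ?_⟩
  · rw [F_eq, hsp, hsqp]; ring
  · rw [F_eq, hsm, hsqm]; ring
  · rw [hsp]; exact hpos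
  · rw [hsm]; linarith
  · intro k
    unfold height
    rw [sum_nbr, hsp, abs_of_pos hpos, lt_abs]
    induction k using Fin.addCases with
    | left i =>
      rw [Fin.append_left]
      fin_cases i
      · left; norm_num; linarith
      · left; norm_num; linarith
      · left; norm_num
        nlinarith [sq_nonneg (2 * S + 1)]
    | right j =>
      rw [Fin.append_right]
      left
      nlinarith [hNa j, int_mul_succ_nonneg (a j - 1)]
  · intro k
    unfold height
    have hneg : 1 + (-2 * ((S + 1) ^ 2 + N) - 1) < 0 := by linarith
    rw [sum_nbr, hsm, abs_of_neg hneg, lt_abs]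
    induction k using Fin.addCases with
    | left i =>
      rw [Fin.append_left]
      fin_cases i
      · right; norm_num; linarith
      · right; norm_num; linarith
      · right; norm_num
        nlinarith [sq_nonneg (2 * S + 1)]
    | right j =>
      rw [Fin.append_right]
      right
      nlinarith [hNa j, int_mul_succ_nonneg (a j), sq_nonneg (S + 1)]
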